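/- Let E be a finite-dimensional real inner product space, and let φ : E → ℝ be differentiable, strictly convex, and supercoercive (φ(x)/‖x‖ → ∞ as ‖x‖ → ∞). Let V ⊆ E be a linear subspace and x₀, yᴾ ∈ E. Then there exists a unique x_EQ ∈ x₀ + V such that ∇φ(x_EQ) − yᴾ ∈ V^⊥; moreover x_EQ is the unique maximizer of the function x ↦ ⟨yᴾ, x⟩ − φ(x) over the affine subspace x₀ + V. -/

import Mathlib

open scoped RealInnerProductSpace

lemma grad_lower_strict {E : Type*} [NormedAddCommGroup E] [InnerProductSpace ℝ E]
    [FiniteDimensional ℝ E]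
    {φ : E → ℝ} (hdiff : Differentiable ℝ φ) (hconv : StrictConvexOn ℝ Set.univ φ)
    {x y : E} (hxy : x ≠ y) :
    φ x + ⟪gradient φ x, y - x⟫ < φ y := by
  set g : ℝ → ℝ := fun t => φ (AffineMap.lineMap x y t) with hg
  have hline : HasDerivAt (fun t : ℝ => AffineMap.lineMap x y t) (y - x) 0 := by
    simp only [AffineMap.lineMap_apply_module']
    simpa using ((hasDerivAt_id (0:ℝ)).smul_const (y - x)).add_const x
  have hF : HasFDerivAt φ (InnerProductSpace.toDual ℝ E (gradient φ x)) x :=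
    (hdiff x).hasGradientAt.hasFDerivAt
  have hg0 : HasDerivAt g ⟪gradient φ x, y - x⟫ 0 := by
    have hF' : HasFDerivAt φ (InnerProductSpace.toDual ℝ E (gradient φ x))
        ((AffineMap.lineMap x y : ℝ →ᵃ[ℝ] E) (0:ℝ)) := by
      rw [AffineMap.lineMap_apply_zero]; exact hF
    have := hF'.comp_hasDerivAt (x := (0:ℝ)) hline
    simp only [Function.comp_def] at this
    simpa [hg, InnerProductSpace.toDual_apply_apply] using this
  have gconv : ConvexOn ℝ Set.univ g := by
    have h := (hconv.convexOn).comp_affineMap (AffineMap.lineMap x y : ℝ →ᵃ[ℝ] E)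
    have he : (AffineMap.lineMap x y : ℝ →ᵃ[ℝ] E) ⁻¹' Set.univ = Set.univ := by simp
    rw [he] at h
    exact h
  have hle : ⟪gradient φ x, y - x⟫ ≤ slope g 0 (1/2) :=
    gconv.le_slope_of_hasDerivAt (Set.mem_univ _) (Set.mem_univ _) (by norm_num) hg0
  have hmid : g (1/2) < (φ x + φ y) / 2 := by
    have h := hconv.2 (Set.mem_univ x) (Set.mem_univ y) hxy
      (by norm_num : (0:ℝ) < 1/2) (by norm_num : (0:ℝ) < 1/2) (by norm_num)
    have hpt : (AffineMap.lineMap x y : ℝ →ᵃ[ℝ] E) (1/2 : ℝ) = (1/2 : ℝ) • x + (1/2 : ℝ) • y := by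
      rw [AffineMap.lineMap_apply_module]; module
    rw [hg]
    simp only [hpt]
    calc φ ((1/2:ℝ) • x + (1/2:ℝ) • y) < (1/2:ℝ) * φ x + (1/2:ℝ) * φ y := by
          simpa [smul_eq_mul] using h
      _ = (φ x + φ y) / 2 := by ring
  have hg00 : g 0 = φ x := by simp [hg]
  rw [slope_def_field, hg00, show (1/2 - 0 : ℝ) = 1/2 by norm_num,
    le_div_iff₀ (by norm_num : (0:ℝ) < 1/2)] at hle
  linarith

/-- **Existence and uniqueness of the equilibrium state.**
For a differentiable, strictly convex and supercoercive potential `φ` on a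
finite-dimensional real inner product space, a linear subspace `V` (the stoichiometric
subspace) and points `x₀`, `yP`, there is a unique point `xEQ` of the stoichiometric
manifold `x₀ + V` with `∇φ xEQ - yP ∈ Vᗮ`; moreover this `xEQ` is the unique maximizer
of `x ↦ ⟪yP, x⟫ - φ x` over `x₀ + V`. -/
theorem equilibrium_state_exists_unique
    {E : Type*} [NormedAddCommGroup E] [InnerProductSpace ℝ E] [FiniteDimensional ℝ E]
    (φ : E → ℝ) (hdiff : Differentiable ℝ φ)
    (hconv : StrictConvexOn ℝ Set.univ φ)
    (hcoer : Filter.Tendsto (fun x => φ x / ‖x‖) (Filter.cocompact E) Filter.atTop)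
    (V : Submodule ℝ E) (x₀ yP : E) :
    ∃ xEQ : E, (xEQ - x₀ ∈ V ∧ gradient φ xEQ - yP ∈ Vᗮ) ∧
      (∀ x : E, x - x₀ ∈ V → gradient φ x - yP ∈ Vᗮ → x = xEQ) ∧
      (∀ x : E, x - x₀ ∈ V → x ≠ xEQ → ⟪yP, x⟫ - φ x < ⟪yP, xEQ⟫ - φ xEQ) := by
  classical
  set f : E → ℝ := fun x => φ x - ⟪yP, x⟫ with hf
  set S : Set E := {x | x - x₀ ∈ V} with hSdef
  have hx₀S : x₀ ∈ S := by simp [hSdef]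
  have hfc : Continuous f := by
    have h1 : Continuous φ := hdiff.continuous
    have h2 : Continuous fun x : E => ⟪yP, x⟫ := (innerSL ℝ yP).continuous
    exact h1.sub h2
  have hSclosed : IsClosed S := by
    have : S = (fun x => x - x₀) ⁻¹' (V : Set E) := rfl
    rw [this]
    exact (Submodule.closed_of_finiteDimensional V).preimage (continuous_id.sub continuous_const)
  -- coercivity of f
  have hfcoer : Filter.Tendsto f (Filter.cocompact E) Filter.atTop := by
    rw [Filter.tendsto_atTop]
    intro b
    have h1 : ∀ᶠ x : E in Filter.cocompact E, (1:ℝ) ≤ ‖x‖ :=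
      (tendsto_norm_cocompact_atTop).eventually_ge_atTop 1
    have h2 : ∀ᶠ x : E in Filter.cocompact E, ‖yP‖ + max b 0 ≤ φ x / ‖x‖ :=
      hcoer.eventually_ge_atTop _
    filter_upwards [h1, h2] with x hx1 hx2
    have hxpos : (0:ℝ) < ‖x‖ := lt_of_lt_of_le one_pos hx1
    have hφ : (‖yP‖ + max b 0) * ‖x‖ ≤ φ x := (le_div_iff₀ hxpos).mp hx2
    have hip : ⟪yP, x⟫ ≤ ‖yP‖ * ‖x‖ := real_inner_le_norm yP x
    have hb : b ≤ max b 0 := le_max_left _ _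
    have h0 : (0:ℝ) ≤ max b 0 := le_max_right _ _
    have : max b 0 ≤ max b 0 * ‖x‖ := le_mul_of_one_le_right h0 hx1
    simp only [hf]
    nlinarith
  -- minimizer of f over S
  obtain ⟨K₀, hK₀c, hK₀⟩ := Filter.mem_cocompact.mp
    (hfcoer.eventually (Filter.eventually_ge_atTop (f x₀ + 1)))
  set K : Set E := (S ∩ K₀) ∪ {x₀} with hK
  have hKcomp : IsCompact K :=
    ((hK₀c.inter_left hSclosed).union isCompact_singleton)
  have hKne : K.Nonempty := ⟨x₀, Or.inr rfl⟩
  obtain ⟨xm, hxmK, hxmmin⟩ := hKcomp.exists_isMinOn hKne hfc.continuousOn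
  have hxmS : xm ∈ S := by
    rcases hxmK with h | h
    · exact h.1
    · rw [Set.mem_singleton_iff.mp h]; exact hx₀S
  have hxmmin' : ∀ x ∈ S, f xm ≤ f x := by
    intro x hxS
    by_cases hxK : x ∈ K₀
    · exact hxmmin (Or.inl ⟨hxS, hxK⟩)
    · have h1 : f x₀ + 1 ≤ f x := hK₀ hxK
      have h2 : f xm ≤ f x₀ := hxmmin (Or.inr rfl)
      linarith
  -- gradient condition at the minimizer
  have horthm : gradient φ xm - yP ∈ Vᗮ := by
    rw [Submodule.mem_orthogonal']
    intro v hv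
    set h : ℝ → ℝ := fun t => f (xm + t • v) with hh
    have hmem : ∀ t : ℝ, xm + t • v ∈ S := by
      intro t
      have : xm + t • v - x₀ = (xm - x₀) + t • v := by abel
      simp only [hSdef, Set.mem_setOf_eq, this]
      exact V.add_mem hxmS (V.smul_mem t hv)
    have hlocmin : IsLocalMin h 0 := by
      apply Filter.Eventually.of_forall
      intro t
      have := hxmmin' _ (hmem t)
      simpa [hh] using this
    have hline : HasDerivAt (fun t : ℝ => xm + t • v) v 0 := by
      simpa using ((hasDerivAt_id (0:ℝ)).smul_const v).const_add xm
    have hF : HasFDerivAt φ (InnerProductSpace.toDual ℝ E (gradient φ xm))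
        (xm + (0:ℝ) • v) := by
      simpa using (hdiff xm).hasGradientAt.hasFDerivAt
    have hd1 : HasDerivAt (fun t : ℝ => φ (xm + t • v)) ⟪gradient φ xm, v⟫ 0 := by
      have := hF.comp_hasDerivAt (x := (0:ℝ)) hline
      simp only [Function.comp_def] at this
      simpa [InnerProductSpace.toDual_apply_apply] using this
    have hF2 : HasFDerivAt (fun x : E => ⟪yP, x⟫) (innerSL ℝ yP) (xm + (0:ℝ) • v) :=
      (innerSL ℝ yP).hasFDerivAt
    have hd2 : HasDerivAt (fun t : ℝ => ⟪yP, xm + t • v⟫) ⟪yP, v⟫ 0 := by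
      have := hF2.comp_hasDerivAt (x := (0:ℝ)) hline
      simp only [Function.comp_def] at this
      simpa using this
    have hd : HasDerivAt h (⟪gradient φ xm, v⟫ - ⟪yP, v⟫) 0 := hd1.sub hd2
    have hzero := hlocmin.hasDerivAt_eq_zero hd
    rw [inner_sub_left]
    linarith [hzero]
  -- strict minimality from the gradient condition
  have hstrict : ∀ x : E, x - x₀ ∈ V → gradient φ x - yP ∈ Vᗮ →
      ∀ z ∈ S, z ≠ x → f x < f z := by
    intro x hxV horth z hzS hzx
    have hkey := grad_lower_strict hdiff hconv (Ne.symm hzx)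
    have hzxV : z - x ∈ V := by
      have : z - x = (z - x₀) - (x - x₀) := by abel
      rw [this]; exact V.sub_mem hzS hxV
    have hperp : ⟪gradient φ x - yP, z - x⟫ = 0 := by
      have := (Submodule.mem_orthogonal V _).mp horth (z - x) hzxV
      rwa [real_inner_comm] at this
    rw [inner_sub_left] at hperp
    have hiner : ⟪yP, z - x⟫ = ⟪yP, z⟫ - ⟪yP, x⟫ := inner_sub_right _ _ _
    simp only [hf]
    linarith
  refine ⟨xm, ⟨hxmS, horthm⟩, ?_, ?_⟩
  · intro x hxV horth
    by_contra hne
    have h1 : f x < f xm := hstrict x hxV horth xm hxmS (Ne.symm hne)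
    have h2 : f xm ≤ f x := hxmmin' x hxV
    linarith
  · intro x hxV hne
    have h1 : f xm < f x := hstrict xm hxmS horthm x hxV hne
    simp only [hf] at h1
    linarith
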